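/- Let G be a connected graph of order n. If ρ(G) ≥ n − 2, then G contains a Hamiltonian path, unless G is isomorphic to H_{n,1} = K_1 ∪ K_{n−1}. -/

import Mathlib

open SimpleGraph Matrix

/-- The spectral radius (largest adjacency eigenvalue) of a finite simple graph. -/
noncomputable def specRad {V : Type*} [Fintype V] (G : SimpleGraph V) : ℝ :=
  letI : DecidableRel G.Adj := Classical.decRel _
  sSup {μ : ℝ | ∃ x : V → ℝ, x ≠ 0 ∧ G.adjMatrix ℝ *ᵥ x = μ • x}

/-- `Hg n a` is `H_{n,a} = K_{a-1} ∇ (K_1 ∪ K_{n-a})`: vertices `0, …, a-2` form a dominating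
clique, vertex `a-1` is joined only to them, and vertices `a, …, n-1` form a clique. -/
def Hg (n a : ℕ) : SimpleGraph (Fin n) where
  Adj x y := x ≠ y ∧ (x.val < a - 1 ∨ y.val < a - 1 ∨ (a ≤ x.val ∧ a ≤ y.val))
  symm := by
    constructor
    rintro x y ⟨h1, h2⟩
    exact ⟨Ne.symm h1, by tauto⟩
  loopless := by constructor; rintro x ⟨h1, -⟩; exact h1 rfl


section Aux
open List Finset

variable {V : Type*}

lemma walk_of_chain' (G : SimpleGraph V) :
    ∀ (l : List V) (a : V), List.Chain G.Adj a l → ∃ b, ∃ p : G.Walk a b, p.support = a :: l := by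
  intro l
  induction l with
  | nil => exact fun a _ => ⟨a, SimpleGraph.Walk.nil, rfl⟩
  | cons x l ih =>
    intro a h
    simp only [List.Chain, List.isChain_cons_cons] at h
    obtain ⟨b, p, hp⟩ := ih x h.2
    exact ⟨b, SimpleGraph.Walk.cons h.1 p, by simp [hp]⟩

variable [DecidableEq V] {G : SimpleGraph V} [DecidableRel G.Adj]

lemma insertP (v : V) :
    ∀ (L : List V) (a : V), (a :: L).Chain' G.Adj →
      2 * L.countP (fun u => decide (¬ G.Adj v u)) + (if G.Adj v a then 0 else 1) ≤ L.length →
      ∃ M : List V, (a :: M).Chain' G.Adj ∧ M ~ v :: L := by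
  intro L
  induction L with
  | nil =>
    intro a _ hcnt
    simp only [List.countP_nil, List.length_nil] at hcnt
    have hadj : G.Adj v a := by by_contra h; simp [h] at hcnt
    exact ⟨[v], by simp [List.Chain', List.isChain_cons_cons, hadj.symm], List.Perm.refl _⟩
  | cons a' L' ih =>
    intro a hchain hcnt
    simp only [List.Chain', List.isChain_cons_cons] at hchain
    by_cases hva : G.Adj v a
    · by_cases hva' : G.Adj v a'
      · refine ⟨v :: a' :: L', ?_, List.Perm.refl _⟩
        simp only [List.Chain', List.isChain_cons_cons]
        exact ⟨hva.symm, hva', hchain.2⟩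
      · -- a' is bad
        have hc' : 2 * L'.countP (fun u => decide (¬ G.Adj v u)) +
            (if G.Adj v a' then 0 else 1) ≤ L'.length := by
          simp only [List.countP_cons, List.length_cons, hva, hva'] at hcnt ⊢
          simp at hcnt ⊢
          omega
        obtain ⟨M', hM', hperm⟩ := ih a' hchain.2 hc'
        refine ⟨a' :: M', ?_, ?_⟩
        · simp only [List.Chain', List.isChain_cons_cons]; exact ⟨hchain.1, hM'⟩
        · exact (hperm.cons a').trans (List.Perm.swap v a' L')
    · -- a is bad
      have hc' : 2 * L'.countP (fun u => decide (¬ G.Adj v u)) +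
          (if G.Adj v a' then 0 else 1) ≤ L'.length := by
        simp only [List.countP_cons, List.length_cons, hva] at hcnt ⊢
        by_cases hva' : G.Adj v a' <;> simp [hva'] at hcnt ⊢ <;> omega
      obtain ⟨M', hM', hperm⟩ := ih a' hchain.2 hc'
      refine ⟨a' :: M', ?_, ?_⟩
      · simp only [List.Chain', List.isChain_cons_cons]; exact ⟨hchain.1, hM'⟩
      · exact (hperm.cons a').trans (List.Perm.swap v a' L')

lemma insertQ (v : V) (L : List V) (hne : L ≠ []) (hchain : L.Chain' G.Adj)
    (hcnt : 2 * L.countP (fun u => decide (¬ G.Adj v u)) ≤ L.length) :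
    ∃ M : List V, M.Chain' G.Adj ∧ M ~ v :: L := by
  obtain ⟨a, L', rfl⟩ := List.exists_cons_of_ne_nil hne
  by_cases hva : G.Adj v a
  · exact ⟨v :: a :: L', by simp only [List.Chain', List.isChain_cons_cons]; exact ⟨hva, hchain⟩, List.Perm.refl _⟩
  · have hc' : 2 * L'.countP (fun u => decide (¬ G.Adj v u)) + (if G.Adj v a then 0 else 1)
        ≤ L'.length := by
      simp only [List.countP_cons, List.length_cons, hva] at hcnt ⊢
      simp at hcnt ⊢
      omega
    obtain ⟨M', hM', hperm⟩ := insertP v L' a hchain hc'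
    exact ⟨a :: M', hM', (hperm.cons a).trans (List.Perm.swap v a L')⟩

lemma hamList : ∀ (n : ℕ) (s : Finset V), s.card = n → s.Nonempty →
    ((∑ u ∈ s, (s.filter (fun x => x ≠ u ∧ ¬ G.Adj u x)).card) + 4 ≤ 2 * s.card ∨
      ∀ u ∈ s, ∀ w ∈ s, u ≠ w → G.Adj u w) →
    ∃ M : List V, M.Chain' G.Adj ∧ M.Nodup ∧ ∀ u, u ∈ M ↔ u ∈ s := by
  intro n
  induction n using Nat.strong_induction_on with
  | _ n ih =>
  intro s hcard hne hyp
  by_cases hcomp : ∀ u ∈ s, ∀ w ∈ s, u ≠ w → G.Adj u w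
  · refine ⟨s.toList, ?_, s.nodup_toList, fun u => Finset.mem_toList⟩
    have hnd : s.toList.Pairwise (· ≠ ·) := s.nodup_toList
    exact (hnd.imp_of_mem (fun ha hb hne' =>
      hcomp _ (Finset.mem_toList.1 ha) _ (Finset.mem_toList.1 hb) hne')).isChain
  · push_neg at hcomp
    obtain ⟨u0, hu0, w0, hw0, hne0, hnadj0⟩ := hcomp
    have hD : (∑ u ∈ s, (s.filter (fun x => x ≠ u ∧ ¬ G.Adj u x)).card) + 4 ≤ 2 * s.card := by
      rcases hyp with h | h
      · exact h
      · exact absurd (h u0 hu0 w0 hw0 hne0) hnadj0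
    set d : V → ℕ := fun w => (s.filter (fun x => x ≠ w ∧ ¬ G.Adj w x)).card with hd
    have hu0pos : 0 < d u0 :=
      Finset.card_pos.2 ⟨w0, Finset.mem_filter.2 ⟨hw0, Ne.symm hne0, hnadj0⟩⟩
    obtain ⟨v, hvP, hmin⟩ := Finset.exists_min_image (s.filter (fun w => 0 < d w)) d
      ⟨u0, Finset.mem_filter.2 ⟨hu0, hu0pos⟩⟩
    rw [Finset.mem_filter] at hvP
    obtain ⟨hvs, hdvpos⟩ := hvP
    set t : Finset V := s.filter (fun x => x ≠ v ∧ ¬ G.Adj v x) with ht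
    have hdvt : d v = t.card := rfl
    have htsub : ∀ u ∈ t, u ∈ s ∧ u ≠ v ∧ ¬ G.Adj v u := fun u hu => by
      simpa using Finset.mem_filter.1 hu
    have htmin : ∀ u ∈ t, d v ≤ d u := by
      intro u hu
      obtain ⟨hus, huv, hunadj⟩ := htsub u hu
      refine hmin u (Finset.mem_filter.2 ⟨hus, Finset.card_pos.2
        ⟨v, Finset.mem_filter.2 ⟨hvs, huv.symm, fun h => hunadj h.symm⟩⟩⟩)
    have hvnt : v ∉ t := fun h => (htsub v h).2.1 rfl
    have htsubs : t ⊆ s := Finset.filter_subset _ _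
    have hsum : d v * (t.card + 1) ≤ ∑ u ∈ s, d u := by
      calc d v * (t.card + 1) = ∑ _u ∈ insert v t, d v := by
            rw [Finset.sum_const, Finset.card_insert_of_notMem hvnt, smul_eq_mul, mul_comm]
        _ ≤ ∑ u ∈ insert v t, d u := Finset.sum_le_sum (by
            intro u hu
            rcases Finset.mem_insert.1 hu with rfl | hu
            · exact le_rfl
            · exact htmin u hu)
        _ ≤ ∑ u ∈ s, d u := Finset.sum_le_sum_of_subset
            (Finset.insert_subset hvs htsubs)
    have h2dv : 2 * d v + 1 ≤ s.card := by
      by_contra hcon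
      push_neg at hcon
      rw [← hdvt] at hsum
      have h1 : d v * (d v + 1) + 4 ≤ 2 * s.card :=
        le_trans (Nat.add_le_add_right hsum 4) hD
      have h2 : d v * (d v + 1) + 4 ≤ 4 * d v := by omega
      rcases le_or_gt (d v) 2 with hk | hk
      · have : d v = 1 ∨ d v = 2 := by omega
        rcases this with h | h <;> rw [h] at h2 <;> omega
      · have h3 : 4 * d v ≤ d v * (d v + 1) := by
          rw [mul_comm 4 (d v)]
          exact Nat.mul_le_mul_left _ (by omega)
        omega
    -- pass to s' = s.erase v
    set s' := s.erase v with hs'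
    have hvs' : v ∉ s' := Finset.notMem_erase v s
    have hins : insert v s' = s := Finset.insert_erase hvs
    have hcard' : s'.card = n - 1 := by rw [Finset.card_erase_of_mem hvs, hcard]
    have hscard3 : 3 ≤ s.card := by omega
    have hne' : s'.Nonempty := Finset.card_pos.1 (by
      rw [Finset.card_erase_of_mem hvs]; omega)
    have htsubs' : t ⊆ s' := fun u hu =>
      Finset.mem_erase.2 ⟨(htsub u hu).2.1, (htsub u hu).1⟩
    -- key sum identity
    have hstep : ∀ u ∈ s', d u = (s'.filter (fun x => x ≠ u ∧ ¬ G.Adj u x)).card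
        + (if u ∈ t then 1 else 0) := by
      intro u hus'
      have hus : u ∈ s := Finset.mem_of_mem_erase hus'
      have hPuv : ((v ≠ u ∧ ¬ G.Adj u v) ↔ u ∈ t) := by
        constructor
        · rintro ⟨h1, h2⟩
          exact Finset.mem_filter.2 ⟨hus, h1.symm, fun h => h2 h.symm⟩
        · intro h
          obtain ⟨_, h1, h2⟩ := htsub u h
          exact ⟨h1.symm, fun h' => h2 h'.symm⟩
      have : s.filter (fun x => x ≠ u ∧ ¬ G.Adj u x)
          = if (v ≠ u ∧ ¬ G.Adj u v) then
              insert v (s'.filter (fun x => x ≠ u ∧ ¬ G.Adj u x))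
            else s'.filter (fun x => x ≠ u ∧ ¬ G.Adj u x) := by
        rw [← hins, Finset.filter_insert]
      rw [hd]
      simp only [this]
      by_cases hc : (v ≠ u ∧ ¬ G.Adj u v)
      · rw [if_pos hc, Finset.card_insert_of_notMem
          (fun hmem => hvs' (Finset.mem_of_mem_filter _ hmem)), if_pos (hPuv.1 hc)]
      · rw [if_neg hc, if_neg (fun h => hc (hPuv.2 h))]
        omega
    have hDsplit : (∑ u ∈ s, d u)
        = (∑ u ∈ s', (s'.filter (fun x => x ≠ u ∧ ¬ G.Adj u x)).card) + 2 * d v := by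
      rw [← hins, Finset.sum_insert hvs']
      rw [Finset.sum_congr rfl hstep, Finset.sum_add_distrib]
      have : (∑ u ∈ s', (if u ∈ t then 1 else 0)) = t.card := by
        rw [Finset.sum_ite_mem, Finset.inter_eq_right.2 htsubs', Finset.card_eq_sum_ones]
      rw [this, hdvt]
      ring
    have hyp' : (∑ u ∈ s', (s'.filter (fun x => x ≠ u ∧ ¬ G.Adj u x)).card) + 4
        ≤ 2 * s'.card := by
      rw [hDsplit] at hD
      have := Finset.card_erase_of_mem hvs
      omega
    obtain ⟨L, hLc, hLnd, hLmem⟩ := ih (n - 1) (by omega) s' hcard' hne' (Or.inl hyp')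
    have hLne : L ≠ [] := by
      obtain ⟨x, hx⟩ := hne'
      intro h
      rw [h] at hLmem
      simpa using (hLmem x).2 hx
    have hLfin : L.toFinset = s' := by
      ext u; rw [List.mem_toFinset]; exact hLmem u
    have hLlen : L.length = s'.card := by
      rw [← hLfin, List.toFinset_card_of_nodup hLnd]
    have hvL : v ∉ L := fun h => hvs' ((hLmem v).1 h)
    have hcntL : L.countP (fun u => decide (¬ G.Adj v u)) = t.card := by
      rw [List.countP_eq_length_filter]
      have hndf : (L.filter (fun u => decide (¬ G.Adj v u))).Nodup := hLnd.filter _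
      rw [← List.toFinset_card_of_nodup hndf]
      congr 1
      ext u
      simp only [List.mem_toFinset, List.mem_filter, decide_eq_true_eq]
      constructor
      · rintro ⟨hu, hnadj⟩
        have hus' := (hLmem u).1 hu
        exact Finset.mem_filter.2 ⟨Finset.mem_of_mem_erase hus',
          ⟨(Finset.mem_erase.1 hus').1, hnadj⟩⟩
      · intro hu
        obtain ⟨hus, huv, hnadj⟩ := htsub u hu
        exact ⟨(hLmem u).2 (htsubs' hu), hnadj⟩
    obtain ⟨M, hMc, hMperm⟩ := insertQ v L hLne hLc (by
      rw [hcntL, ← hdvt, hLlen, Finset.card_erase_of_mem hvs]; omega)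
    refine ⟨M, hMc, ?_, ?_⟩
    · rw [hMperm.nodup_iff]
      exact List.nodup_cons.2 ⟨hvL, hLnd⟩
    · intro u
      rw [hMperm.mem_iff, List.mem_cons, hLmem u, hs', Finset.mem_erase]
      constructor
      · rintro (rfl | ⟨h1, h2⟩)
        · exact hvs
        · exact h2
      · intro hus
        by_cases h : u = v
        · exact Or.inl h
        · exact Or.inr ⟨h, hus⟩

variable [Fintype V]

lemma degree_pos_of_connected [DecidableEq V] {G : SimpleGraph V}
    [DecidableRel G.Adj] (hconn : G.Connected) (h2 : 1 < Fintype.card V) (v : V) :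
    0 < G.degree v := by
  obtain ⟨w, hw⟩ := Fintype.exists_ne_of_one_lt_card h2 v
  obtain ⟨p⟩ := hconn.preconnected v w
  cases p with
  | nil => exact absurd rfl hw.symm
  | cons h q => exact G.degree_pos_iff_exists_adj v |>.2 ⟨_, h⟩

lemma eig_sq_le [DecidableEq V] (G : SimpleGraph V) [DecidableRel G.Adj]
    (hdeg : ∀ v, 0 < G.degree v) {μ : ℝ} {x : V → ℝ} (hx : x ≠ 0)
    (h : G.adjMatrix ℝ *ᵥ x = μ • x) :
    μ * μ + ((Fintype.card V : ℝ) - 1) ≤ 2 * G.edgeFinset.card := by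
  cases isEmpty_or_nonempty V with
  | inl hV => exact absurd (funext fun v => (hV.false v).elim) hx
  | inr hV =>
  obtain ⟨i, -, hmax⟩ := Finset.exists_max_image Finset.univ (fun j => |x j|) univ_nonempty
  have hmax' : ∀ j, |x j| ≤ |x i| := fun j => hmax j (mem_univ j)
  have hM : 0 < |x i| := by
    obtain ⟨j, hj⟩ := Function.ne_iff.1 hx
    exact lt_of_lt_of_le (abs_pos.2 hj) (hmax' j)
  -- iterate the eigen equation
  have h2 : G.adjMatrix ℝ *ᵥ (G.adjMatrix ℝ *ᵥ x) = (μ * μ) • x := by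
    rw [h, mulVec_smul, h, smul_smul]
  have h3 : (μ * μ) * x i = ∑ j ∈ G.neighborFinset i, ∑ k ∈ G.neighborFinset j, x k := by
    have := congrFun h2 i
    rw [adjMatrix_mulVec_apply] at this
    simp only [Pi.smul_apply, smul_eq_mul] at this
    rw [← this]
    exact Finset.sum_congr rfl fun j _ => by rw [adjMatrix_mulVec_apply]
  have key : (μ * μ) * |x i| ≤ (∑ j ∈ G.neighborFinset i, (G.degree j : ℝ)) * |x i| := by
    have habs : |(μ * μ) * x i| = (μ * μ) * |x i| := by
      rw [abs_mul, abs_of_nonneg (mul_self_nonneg μ)]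
    rw [← habs, h3]
    calc |∑ j ∈ G.neighborFinset i, ∑ k ∈ G.neighborFinset j, x k|
        ≤ ∑ j ∈ G.neighborFinset i, |∑ k ∈ G.neighborFinset j, x k| :=
          Finset.abs_sum_le_sum_abs _ _
      _ ≤ ∑ j ∈ G.neighborFinset i, ∑ k ∈ G.neighborFinset j, |x k| :=
          Finset.sum_le_sum fun j _ => Finset.abs_sum_le_sum_abs _ _
      _ ≤ ∑ j ∈ G.neighborFinset i, ∑ _k ∈ G.neighborFinset j, |x i| :=
          Finset.sum_le_sum fun j _ => Finset.sum_le_sum fun k _ => hmax' k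
      _ = (∑ j ∈ G.neighborFinset i, (G.degree j : ℝ)) * |x i| := by
          rw [Finset.sum_mul]
          exact Finset.sum_congr rfl fun j _ => by
            rw [Finset.sum_const, nsmul_eq_mul, G.card_neighborFinset_eq_degree]
  have key2 : μ * μ ≤ ∑ j ∈ G.neighborFinset i, (G.degree j : ℝ) :=
    le_of_mul_le_mul_right key hM
  -- the degree-sum bound, in ℕ
  have hnat : (∑ j ∈ G.neighborFinset i, G.degree j) + (Fintype.card V - 1)
      ≤ 2 * G.edgeFinset.card := by
    have htot : ∑ v ∈ Finset.univ \ G.neighborFinset i, G.degree v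
        + ∑ j ∈ G.neighborFinset i, G.degree j = ∑ v, G.degree v :=
      Finset.sum_sdiff (Finset.subset_univ _)
    have hii : i ∈ Finset.univ \ G.neighborFinset i := by
      simp [G.notMem_neighborFinset_self i]
    have hsplit : G.degree i + ∑ v ∈ (Finset.univ \ G.neighborFinset i).erase i, G.degree v
        = ∑ v ∈ Finset.univ \ G.neighborFinset i, G.degree v :=
      Finset.add_sum_erase _ (fun v => G.degree v) hii
    have hcard1 : ((Finset.univ \ G.neighborFinset i).erase i).card
        = Fintype.card V - G.degree i - 1 := by
      rw [Finset.card_erase_of_mem hii, Finset.card_sdiff_of_subset (Finset.subset_univ _)]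
      rw [Finset.card_univ, G.card_neighborFinset_eq_degree]
    have hlow : ((Finset.univ \ G.neighborFinset i).erase i).card
        ≤ ∑ v ∈ (Finset.univ \ G.neighborFinset i).erase i, G.degree v := by
      rw [Finset.card_eq_sum_ones]
      exact Finset.sum_le_sum fun v _ => hdeg v
    have hdle : G.degree i ≤ Fintype.card V - 1 := by
      rw [← G.card_neighborFinset_eq_degree]
      have : G.neighborFinset i ⊆ Finset.univ.erase i := fun w hw =>
        Finset.mem_erase.2 ⟨(G.mem_neighborFinset i w |>.1 hw).ne', Finset.mem_univ w⟩
      have := Finset.card_le_card this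
      rwa [Finset.card_erase_of_mem (Finset.mem_univ i), Finset.card_univ] at this
    have hhs := G.sum_degrees_eq_twice_card_edges
    omega
  have hcast : (∑ j ∈ G.neighborFinset i, (G.degree j : ℝ)) + ((Fintype.card V : ℝ) - 1)
      ≤ 2 * G.edgeFinset.card := by
    have h1 : 1 ≤ Fintype.card V := Fintype.card_pos
    have := (Nat.cast_le (α := ℝ)).2 hnat
    push_cast [Nat.cast_sub h1] at this
    linarith
  linarith

lemma partA [DecidableEq V] (G : SimpleGraph V) [DecidableRel G.Adj]
    (hconn : G.Connected) (h3 : 3 ≤ Fintype.card V)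
    (hρ : (Fintype.card V : ℝ) - 2 ≤
      sSup {μ : ℝ | ∃ x : V → ℝ, x ≠ 0 ∧ G.adjMatrix ℝ *ᵥ x = μ • x}) :
    (∑ u, (Finset.univ.filter (fun x => x ≠ u ∧ ¬ G.Adj u x)).card) + 4
      ≤ 2 * Fintype.card V := by
  have hVne : Nonempty V := Fintype.card_pos_iff.1 (by omega)
  have hdeg : ∀ v, 0 < G.degree v := degree_pos_of_connected hconn (by omega)
  -- the eigenvalue set is nonempty
  have hA : (G.adjMatrix ℝ).IsHermitian := by
    ext i j
    simp [Matrix.conjTranspose_apply, G.adj_comm i j]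
  set S : Set ℝ := {μ : ℝ | ∃ x : V → ℝ, x ≠ 0 ∧ G.adjMatrix ℝ *ᵥ x = μ • x} with hS
  have hSne : S.Nonempty := by
    obtain ⟨j₀⟩ := hVne
    refine ⟨hA.eigenvalues j₀, ⇑(hA.eigenvectorBasis j₀), ?_, hA.mulVec_eigenvectorBasis j₀⟩
    intro hzero
    exact hA.eigenvectorBasis.orthonormal.ne_zero j₀ (by ext k; exact congrFun hzero k)
  set c : ℝ := 2 * G.edgeFinset.card - ((Fintype.card V : ℝ) - 1) with hc
  have hub : ∀ μ ∈ S, μ ≤ Real.sqrt c := by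
    rintro μ ⟨x, hx, hμ⟩
    refine Real.le_sqrt_of_sq_le ?_
    have := eig_sq_le G hdeg hx hμ
    rw [sq]
    linarith
  have hρ' : (Fintype.card V : ℝ) - 2 ≤ Real.sqrt c := le_trans hρ (csSup_le hSne hub)
  have h3' : (3 : ℝ) ≤ (Fintype.card V : ℝ) := by exact_mod_cast h3
  have hc0 : 0 ≤ c := le_of_lt (Real.sqrt_pos.1 (by linarith))
  have hsq : ((Fintype.card V : ℝ) - 2) * ((Fintype.card V : ℝ) - 2) ≤ c := by
    have := mul_self_le_mul_self (by linarith) hρ'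
    rwa [Real.mul_self_sqrt hc0] at this
  -- cast to ℕ
  have hint : (Fintype.card V - 2) * (Fintype.card V - 2) + (Fintype.card V - 1)
      ≤ 2 * G.edgeFinset.card := by
    rw [← Nat.cast_le (α := ℝ)]
    push_cast [Nat.cast_sub (by omega : 2 ≤ Fintype.card V),
      Nat.cast_sub (by omega : 1 ≤ Fintype.card V)]
    linarith
  -- complement degree identity
  have hcompl : ∀ u : V, (Finset.univ.filter (fun x => x ≠ u ∧ ¬ G.Adj u x)).card
      + G.degree u = Fintype.card V - 1 := by
    intro u
    have h1 : (Finset.univ.erase u).filter (fun x => G.Adj u x) = G.neighborFinset u := by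
      ext x
      simp only [Finset.mem_filter, Finset.mem_erase, Finset.mem_univ, and_true,
        mem_neighborFinset]
      exact ⟨fun h => h.2, fun h => ⟨h.ne', h⟩⟩
    have h2 : (Finset.univ.erase u).filter (fun x => ¬ G.Adj u x)
        = Finset.univ.filter (fun x => x ≠ u ∧ ¬ G.Adj u x) := by
      ext x
      by_cases hxu : x = u <;> simp [hxu]
    have hpart := Finset.card_filter_add_card_filter_not
      (s := Finset.univ.erase u) (p := fun x => G.Adj u x)
    rw [h1, h2, Finset.card_erase_of_mem (Finset.mem_univ u), Finset.card_univ] at hpart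
    rw [← hpart, G.card_neighborFinset_eq_degree]
    omega
  have hsumtot : (∑ u, (Finset.univ.filter (fun x => x ≠ u ∧ ¬ G.Adj u x)).card)
      + 2 * G.edgeFinset.card = Fintype.card V * (Fintype.card V - 1) := by
    rw [← G.sum_degrees_eq_twice_card_edges, ← Finset.sum_add_distrib]
    rw [Finset.sum_congr rfl (fun u _ => hcompl u), Finset.sum_const, Finset.card_univ,
      smul_eq_mul]
  -- final arithmetic
  obtain ⟨m, hm⟩ : ∃ m, Fintype.card V = m + 3 := ⟨Fintype.card V - 3, by omega⟩
  rw [hm] at hint hsumtot ⊢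
  have e2 : m + 3 - 2 = m + 1 := by omega
  have e1 : m + 3 - 1 = m + 2 := by omega
  rw [e2, e1] at hint
  rw [e1] at hsumtot
  have k1 : (m + 1) * (m + 1) + (m + 2) = (m + 1) * (m + 2) + 1 := by ring
  have k2 : (m + 3) * (m + 2) = (m + 1) * (m + 2) + 2 * (m + 2) := by ring
  obtain ⟨cc, hcc⟩ : Even ((m + 1) * (m + 2)) := by
    have := Nat.even_mul_succ_self (m + 1)
    rwa [(by omega : m + 1 + 1 = m + 2)] at this
  omega

end Aux


/-- Let `G` be a connected graph of order `n`. If `ρ(G) ≥ n - 2`, then `G` contains a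
Hamiltonian path, unless `G ≅ H_{n,1} = K_1 ∪ K_{n-1}`. -/
theorem hamiltonianPath_of_spectralRadius
    {V : Type*} [Fintype V] [DecidableEq V] (G : SimpleGraph V) (n : ℕ)
    (hcard : Fintype.card V = n) (hconn : G.Connected)
    (hρ : (n : ℝ) - 2 ≤ specRad G) :
    (∃ (a b : V) (p : G.Walk a b), p.IsHamiltonian) ∨ Nonempty (G ≃g Hg n 1) := by
  by_cases hn0 : n = 0
  · subst hn0
    haveI : IsEmpty V := Fintype.card_eq_zero_iff.1 hcard
    exact Or.inr ⟨{ toEquiv := Equiv.equivOfIsEmpty V (Fin 0),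
                    map_rel_iff' := by intro a; exact isEmptyElim a }⟩
  · left
    letI instAdj : DecidableRel G.Adj := Classical.decRel _
    rw [specRad] at hρ
    have hn1 : 1 ≤ n := by omega
    have hyp : (∑ u ∈ (Finset.univ : Finset V),
          ((Finset.univ : Finset V).filter (fun x => x ≠ u ∧ ¬ G.Adj u x)).card) + 4
          ≤ 2 * (Finset.univ : Finset V).card ∨
        ∀ u ∈ (Finset.univ : Finset V), ∀ w ∈ (Finset.univ : Finset V), u ≠ w → G.Adj u w := by
      by_cases hn3 : 3 ≤ n
      · left
        have := partA G hconn (by omega) (by rw [hcard]; exact hρ)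
        rwa [Finset.card_univ]
      · right
        intro u _ w _ hne
        have hcard2 : Fintype.card V ≤ 2 := by omega
        obtain ⟨p⟩ := hconn.preconnected u w
        cases p with
        | nil => exact absurd rfl hne
        | @cons _ y _ h q =>
          have hyu : y ≠ u := h.ne'
          by_cases hyw : y = w
          · exact hyw ▸ h
          · exfalso
            have h1 : ({y, w} : Finset V).card = 2 := by
              rw [Finset.card_insert_of_notMem (by simp [hyw]), Finset.card_singleton]
            have h2 : ({y, w} : Finset V) ⊆ Finset.univ.erase u := by
              intro z hz
              rcases Finset.mem_insert.1 hz with rfl | hz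
              · exact Finset.mem_erase.2 ⟨hyu, Finset.mem_univ _⟩
              · rw [Finset.mem_singleton] at hz
                subst hz
                exact Finset.mem_erase.2 ⟨hne.symm, Finset.mem_univ _⟩
            have h3 := Finset.card_le_card h2
            rw [Finset.card_erase_of_mem (Finset.mem_univ u), Finset.card_univ] at h3
            omega
    haveI : Nonempty V := Fintype.card_pos_iff.1 (by omega)
    obtain ⟨M, hMc, hMnd, hMmem⟩ := hamList (G := G) (Fintype.card V) Finset.univ
      (Finset.card_univ) Finset.univ_nonempty (by rwa [Finset.card_univ] at hyp ⊢)
    have hMne : M ≠ [] := by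
      obtain ⟨x⟩ := ‹Nonempty V›
      intro h
      rw [h] at hMmem
      simpa using (hMmem x).2 (Finset.mem_univ x)
    obtain ⟨a, M', rfl⟩ := List.exists_cons_of_ne_nil hMne
    obtain ⟨b, p, hsup⟩ := walk_of_chain' G M' a hMc
    refine ⟨a, b, p, fun u => ?_⟩
    rw [hsup]
    exact List.count_eq_one_of_mem hMnd ((hMmem u).2 (Finset.mem_univ u))
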